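/- Let A ∈ 𝒮ⁿ[k] be a Robinson matrix and let d ∈ 𝔻ᵏ satisfy the path condition for A. Then the map Π : [n] → ℝ defined recursively by Π(1) = 0 and Π(v) = (ub_v + lb_v)/2 for 2 ≤ v ≤ n satisfies the strict inequality system: for all u < v in [n] and all t ∈ {0,…,k}, a_{u,v} = t if and only if d_{t+1} < Π(v) − Π(u) < d_t, where by convention d_0 = +∞ and d_{k+1} = 0. In particular Π is a uniform embedding of A with respect to d. -/

import Mathlib

/-- The standard unit vector `χ_t ∈ ℤᵏ` (as a function `ℕ → ℤ`, supported on index `t`). -/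
def chi (t : ℕ) : ℕ → ℤ := fun i => if i = t then 1 else 0

/-- The dot product `bᵀ d = Σ_{i=1}^k b_i d_i`. -/
def dotProd (k : ℕ) (b : ℕ → ℤ) (d : ℕ → ℝ) : ℝ :=
  ∑ i ∈ Finset.Icc 1 k, (b i : ℝ) * d i

/-- `A ∈ 𝒮ⁿ[k]`: a symmetric matrix with entries in `{0,…,k}`, diagonal `k`,
entries increasing towards the diagonal. -/
def IsRobinson (n k : ℕ) (a : Fin n → Fin n → ℕ) : Prop :=
  (∀ u v, a u v = a v u) ∧ (∀ u, a u u = k) ∧ (∀ u v, a u v ≤ k) ∧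
    ∀ u v w : Fin n, u < v → v < w → a u w ≤ a u v ∧ a u w ≤ a v w

/-- `d ∈ 𝔻ᵏ`: threshold vectors with `d 1 > d 2 > ⋯ > d k > 0`
(values outside `{1,…,k}` are irrelevant). -/
def IsThreshold (k : ℕ) (d : ℕ → ℝ) : Prop :=
  (∀ i, 1 ≤ i → i < k → d (i + 1) < d i) ∧ 0 < d k

/-- Uniform embedding: for all pairs `u,v` and all `t ≤ k`,
`a u v = t ↔ d_{t+1} < |f v − f u| ≤ d_t`, with conventions `d_0 = +∞`, `d_{k+1} = −∞`. -/
def IsUnifEmb (n k : ℕ) (a : Fin n → Fin n → ℕ) (d : ℕ → ℝ)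
    (f : Fin n → ℝ) : Prop :=
  ∀ u v : Fin n, ∀ t : ℕ, t ≤ k →
    (a u v = t ↔ (t = k ∨ d (t + 1) < |f v - f u|) ∧ (t = 0 ∨ |f v - f u| ≤ d t))

/-- The strict inequality system: for all `u < v` and all `t ≤ k`,
`a u v = t ↔ d_{t+1} < f v − f u < d_t`, with conventions `d_0 = +∞`, `d_{k+1} = 0`. -/
def SatisfiesStrict (n k : ℕ) (a : Fin n → Fin n → ℕ) (d : ℕ → ℝ)
    (f : Fin n → ℝ) : Prop :=
  ∀ u v : Fin n, u < v → ∀ t : ℕ, t ≤ k →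
    (a u v = t ↔ ((if t = k then (0 : ℝ) else d (t + 1)) < f v - f u) ∧
      (t = 0 ∨ f v - f u < d t))

/-- `β⁺(x,y)`: for `x < y`, `β⁺(x,y) = χ_{a x y}` (junk value `χ_0` when `a x y = 0`,
where it is undefined); for `x > y`, `β⁺(x,y) = −β⁻(y,x)`. -/
def betaP {n : ℕ} (k : ℕ) (a : Fin n → Fin n → ℕ) (x y : Fin n) : ℕ → ℤ :=
  if x < y then chi (a x y)
  else if y < x then (if a x y = k then 0 else -chi (a x y + 1))
  else 0

/-- `β⁻(x,y)`: for `x < y`, `β⁻(x,y) = χ_{a x y + 1}` if `a x y < k` and `0` if `a x y = k`;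
for `x > y`, `β⁻(x,y) = −β⁺(y,x)`. -/
def betaM {n : ℕ} (k : ℕ) (a : Fin n → Fin n → ℕ) (x y : Fin n) : ℕ → ℤ :=
  if x < y then (if a x y = k then 0 else chi (a x y + 1))
  else if y < x then -chi (a x y)
  else 0

/-- `β⁺(W) = Σ_i β⁺(w_{i−1}, w_i)` over the steps of the walk `W`. -/
def betaPWalk {n : ℕ} (k : ℕ) (a : Fin n → Fin n → ℕ) (w : List (Fin n)) : ℕ → ℤ :=
  ((w.zip w.tail).map fun p => betaP k a p.1 p.2).sum

/-- `β⁻(W) = Σ_i β⁻(w_{i−1}, w_i)` over the steps of the walk `W`. -/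
def betaMWalk {n : ℕ} (k : ℕ) (a : Fin n → Fin n → ℕ) (w : List (Fin n)) : ℕ → ℤ :=
  ((w.zip w.tail).map fun p => betaM k a p.1 p.2).sum

/-- A `(u,v)`-upper-bound-walk: a walk from `u` to `v` with consecutive entries distinct,
in which every increasing step is an edge (`a x y ≥ 1`). -/
def IsUBWalk {n : ℕ} (a : Fin n → Fin n → ℕ) (u v : Fin n) (w : List (Fin n)) : Prop :=
  w.head? = some u ∧ w.getLast? = some v ∧
    List.Chain' (fun x y => x ≠ y ∧ (x < y → 1 ≤ a x y)) w

/-- A `(u,v)`-lower-bound-walk: a walk from `u` to `v` with consecutive entries distinct,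
in which every decreasing step is an edge (`a x y ≥ 1`). -/
def IsLBWalk {n : ℕ} (a : Fin n → Fin n → ℕ) (u v : Fin n) (w : List (Fin n)) : Prop :=
  w.head? = some u ∧ w.getLast? = some v ∧
    List.Chain' (fun x y => x ≠ y ∧ (y < x → 1 ≤ a x y)) w

/-- An upper-bound-cycle: a `(u,u)`-upper-bound-walk of length `p ≥ 2` in which
`u = w_0 = w_p` is the only repeated vertex. -/
def IsUBCycle {n : ℕ} (a : Fin n → Fin n → ℕ) (w : List (Fin n)) : Prop :=
  ∃ u : Fin n, IsUBWalk a u u w ∧ 3 ≤ w.length ∧ w.dropLast.Nodup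

/-- The path condition for `A` and `d`: for all `u < v`, every `(u,v)`-upper-bound-path `W₁`
and every `(u,v)`-lower-bound-path `W₂` satisfy `β⁻(W₂)ᵀ d < β⁺(W₁)ᵀ d`. -/
def PathCondition (n k : ℕ) (a : Fin n → Fin n → ℕ) (d : ℕ → ℝ) : Prop :=
  ∀ u v : Fin n, u < v → ∀ w₁ w₂ : List (Fin n),
    IsUBWalk a u v w₁ → w₁.Nodup → IsLBWalk a u v w₂ → w₂.Nodup →
      dotProd k (betaMWalk k a w₂) d < dotProd k (betaPWalk k a w₁) d

/-- The prefix-sum partial order `⪯` on `ℤᵏ`. -/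
def Preceq (k : ℕ) (x y : ℕ → ℤ) : Prop :=
  ∀ t, 1 ≤ t → t ≤ k → ∑ i ∈ Finset.Icc 1 t, x i ≤ ∑ i ∈ Finset.Icc 1 t, y i

namespace Stmt9
section Generic
variable {α : Type*} {R : α → α → Prop}


variable {α : Type*} {R : α → α → Prop}

lemma chain'_iff_stp {l : List α} :
    List.Chain' R l ↔ ∀ p ∈ l.zip l.tail, R p.1 p.2 := by
  induction l with
  | nil => simp [List.Chain']
  | cons a l ih =>
    cases l with
    | nil => simp [List.Chain']
    | cons b t =>
      unfold List.Chain'; rw [List.isChain_cons_cons]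
      simp only [List.tail_cons, List.zip_cons_cons, List.mem_cons] at ih ⊢
      constructor
      · rintro ⟨h1, h2⟩ p (rfl | hp)
        · exact h1
        · exact (ih.1 h2) p hp
      · intro h
        exact ⟨h _ (Or.inl rfl), ih.2 fun p hp => h p (Or.inr hp)⟩

lemma stp_append {w₁ w₂ : List α} {m : α} (h₁ : w₁.getLast? = some m)
    (h₂ : w₂.head? = some m) :
    (w₁ ++ w₂.tail).zip (w₁ ++ w₂.tail).tail = w₁.zip w₁.tail ++ w₂.zip w₂.tail := by
  induction w₁ with
  | nil => simp at h₁
  | cons x w₁ ih =>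
    cases w₁ with
    | nil =>
      simp only [List.getLast?_singleton, Option.some_inj] at h₁
      subst h₁
      cases w₂ with
      | nil => simp at h₂
      | cons b t =>
        simp only [List.head?_cons, Option.some_inj] at h₂
        subst h₂
        simp
    | cons y w₁ =>
      have h₁' : (y :: w₁).getLast? = some m := by
        rwa [List.getLast?_cons_cons] at h₁
      have := ih h₁'
      simp only [List.cons_append, List.tail_cons, List.zip_cons_cons] at this ⊢
      rw [this]

lemma stp_concat {L : List α} {m : α} (h : L.getLast? = some m) (a : α) :
    (L ++ [a]).zip (L ++ [a]).tail = L.zip L.tail ++ [(m, a)] := by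
  have := stp_append (w₂ := [m, a]) h rfl
  simpa using this

lemma stp_reverse {l : List α} :
    l.reverse.zip l.reverse.tail = ((l.zip l.tail).map Prod.swap).reverse := by
  induction l with
  | nil => simp
  | cons x L ih =>
    cases L with
    | nil => simp
    | cons y t =>
      have hL : (y :: t).reverse.getLast? = some y := by
        rw [List.getLast?_reverse]; rfl
      rw [List.reverse_cons, stp_concat hL x]
      simp only [List.tail_cons, List.zip_cons_cons, List.map_cons, List.reverse_cons]
      rw [← List.reverse_cons (a := y) (as := t), ih]
      simp



lemma stp_skip (l₁ : List α) (x : α) (l₃ : List α) :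
    (l₁ ++ x :: l₃).zip (l₁ ++ x :: l₃).tail =
      (l₁ ++ [x]).zip (l₁ ++ [x]).tail ++ (x :: l₃).zip (x :: l₃).tail := by
  have := stp_append (w₁ := l₁ ++ [x]) (w₂ := x :: l₃) (m := x) (by simp) (by simp)
  simpa using this

lemma stp_surgery (l₁ : List α) (x : α) (l₂ l₃ : List α) :
    (l₁ ++ x :: l₂ ++ x :: l₃).zip (l₁ ++ x :: l₂ ++ x :: l₃).tail =
      ((l₁ ++ [x]).zip (l₁ ++ [x]).tail ++
        ((x :: l₂) ++ [x]).zip ((x :: l₂) ++ [x]).tail) ++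
        (x :: l₃).zip (x :: l₃).tail := by
  have h1 := stp_append (w₁ := l₁ ++ [x]) (w₂ := x :: (l₂ ++ x :: l₃)) (m := x)
    (by simp) (by simp)
  have h2 := stp_skip (x :: l₂) x l₃
  simp only [List.tail_cons, List.cons_append, List.append_assoc, List.nil_append] at h1 h2 ⊢
  rw [h1, h2]


lemma walk_ne_nil {l : List α} {u : α} (h : l.head? = some u) : l ≠ [] := by
  cases l <;> simp_all

lemma gwalk_append {l₁ l₂ : List α} {u m v : α}
    (a1 : l₁.head? = some u) (b1 : l₁.getLast? = some m)
    (a2 : l₂.head? = some m) (b2 : l₂.getLast? = some v)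
    (c1 : List.Chain' R l₁) (c2 : List.Chain' R l₂) :
    (l₁ ++ l₂.tail).head? = some u ∧ (l₁ ++ l₂.tail).getLast? = some v ∧
      List.Chain' R (l₁ ++ l₂.tail) := by
  refine ⟨?_, ?_, ?_⟩
  · rw [List.head?_append_of_ne_nil _ (walk_ne_nil a1)]; exact a1
  · rcases l₂ with _ | ⟨x, t⟩
    · simp at a2
    · simp only [List.head?_cons, Option.some_inj] at a2; subst a2
      rcases t with _ | ⟨y, t⟩
      · simp only [List.getLast?_singleton, Option.some_inj] at b2
        simp only [List.tail_cons, List.append_nil]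
        rw [b1, b2]
      · rw [List.tail_cons, List.getLast?_append_of_ne_nil _ (by simp)]
        rw [List.getLast?_cons_cons] at b2
        exact b2
  · rw [chain'_iff_stp] at c1 c2 ⊢
    rw [stp_append b1 a2]
    intro p hp
    rcases List.mem_append.1 hp with h | h
    · exact c1 p h
    · exact c2 p h

lemma head?_append_cons (l : List α) (x : α) (t : List α) :
    (l ++ x :: t).head? = (l ++ [x]).head? := by cases l <;> simp

lemma exists_dup_decomp {l : List α} (h : ¬ l.Nodup) :
    ∃ (l₁ : List α) (x : α) (l₂ l₃ : List α), l = l₁ ++ x :: l₂ ++ x :: l₃ := by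
  induction l with
  | nil => simp at h
  | cons b l ih =>
    by_cases hb : b ∈ l
    · obtain ⟨l₂, l₃, rfl⟩ := List.append_of_mem hb
      exact ⟨[], b, l₂, l₃, by simp⟩
    · have : ¬ l.Nodup := fun hl => h (List.nodup_cons.2 ⟨hb, hl⟩)
      obtain ⟨l₁, x, l₂, l₃, rfl⟩ := ih this
      exact ⟨b :: l₁, x, l₂, l₃, by simp⟩


end Generic

lemma dot_add (k : ℕ) (x y : ℕ → ℤ) (d : ℕ → ℝ) :
    dotProd k (x + y) d = dotProd k x d + dotProd k y d := by
  simp [dotProd, add_mul, Finset.sum_add_distrib]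

lemma dot_zero (k : ℕ) (d : ℕ → ℝ) : dotProd k 0 d = 0 := by simp [dotProd]

lemma dot_neg (k : ℕ) (x : ℕ → ℤ) (d : ℕ → ℝ) : dotProd k (-x) d = - dotProd k x d := by
  simp [dotProd, Finset.sum_neg_distrib]

lemma dot_listsum (k : ℕ) (L : List (ℕ → ℤ)) (d : ℕ → ℝ) :
    dotProd k L.sum d = (L.map fun b => dotProd k b d).sum := by
  induction L with
  | nil => simp [dot_zero]
  | cons x L ih => simp [dot_add, ih]

lemma dot_chi (k t : ℕ) (d : ℕ → ℝ) :
    dotProd k (chi t) d = if t ∈ Finset.Icc 1 k then d t else 0 := by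
  rw [dotProd, Finset.sum_congr rfl (g := fun i => if i = t then d i else 0)
    (fun i _ => by by_cases h : i = t <;> simp [chi, h]), Finset.sum_ite_eq']

variable {n : ℕ} {k : ℕ} {a : Fin n → Fin n → ℕ}

lemma betaP_rev (hs : ∀ x y, a x y = a y x) (x y : Fin n) :
    betaP k a y x = - betaM k a x y := by
  rcases lt_trichotomy x y with h | h | h
  · rw [betaP, if_neg (asymm h), if_pos h, betaM, if_pos h, hs y x]
    split <;> simp
  · subst h; simp [betaP, betaM]
  · rw [betaP, if_pos h, betaM, if_neg (asymm h), if_pos h, hs y x]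
    simp

lemma betaPWalk_append {w₁ w₂ : List (Fin n)} {m : Fin n} (h₁ : w₁.getLast? = some m)
    (h₂ : w₂.head? = some m) :
    betaPWalk k a (w₁ ++ w₂.tail) = betaPWalk k a w₁ + betaPWalk k a w₂ := by
  rw [betaPWalk, stp_append h₁ h₂, List.map_append, List.sum_append]; rfl

lemma betaMWalk_append {w₁ w₂ : List (Fin n)} {m : Fin n} (h₁ : w₁.getLast? = some m)
    (h₂ : w₂.head? = some m) :
    betaMWalk k a (w₁ ++ w₂.tail) = betaMWalk k a w₁ + betaMWalk k a w₂ := by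
  rw [betaMWalk, stp_append h₁ h₂, List.map_append, List.sum_append]; rfl

lemma sum_map_neg' {β : Type*} (L : List β) (g : β → ℕ → ℤ) :
    (L.map fun x => -g x).sum = -(L.map g).sum := by
  induction L with
  | nil => simp
  | cons x L ih => simp [ih]; abel

lemma betaPWalk_reverse (hs : ∀ x y, a x y = a y x) (w : List (Fin n)) :
    betaPWalk k a w.reverse = - betaMWalk k a w := by
  rw [betaPWalk, stp_reverse, List.map_reverse, List.sum_reverse, List.map_map]
  have : ((fun p : Fin n × Fin n => betaP k a p.1 p.2) ∘ Prod.swap)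
      = fun p : Fin n × Fin n => -betaM k a p.1 p.2 := by
    funext p; exact betaP_rev hs p.1 p.2
  rw [this, sum_map_neg']; rfl

lemma betaMWalk_reverse (hs : ∀ x y, a x y = a y x) (w : List (Fin n)) :
    betaMWalk k a w.reverse = - betaPWalk k a w := by
  have := betaPWalk_reverse (k := k) hs w.reverse
  rw [List.reverse_reverse] at this
  rw [this, neg_neg]


section Reduce
variable {n k : ℕ} {a : Fin n → Fin n → ℕ} {d : ℕ → ℝ}

lemma UB_reverse (hs : ∀ x y, a x y = a y x) {u v : Fin n} {w : List (Fin n)}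
    (h : IsUBWalk a u v w) : IsLBWalk a v u w.reverse := by
  obtain ⟨h1, h2, h3⟩ := h
  refine ⟨by rw [List.head?_reverse]; exact h2,
    by rw [List.getLast?_reverse]; exact h1, ?_⟩
  unfold List.Chain'; rw [List.isChain_reverse]
  exact List.IsChain.imp (fun x y hxy =>
    ⟨hxy.1.symm, fun hlt => by rw [hs y x]; exact hxy.2 hlt⟩) h3

lemma LB_reverse (hs : ∀ x y, a x y = a y x) {u v : Fin n} {w : List (Fin n)}
    (h : IsLBWalk a u v w) : IsUBWalk a v u w.reverse := by
  obtain ⟨h1, h2, h3⟩ := h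
  refine ⟨by rw [List.head?_reverse]; exact h2,
    by rw [List.getLast?_reverse]; exact h1, ?_⟩
  unfold List.Chain'; rw [List.isChain_reverse]
  exact List.IsChain.imp (fun x y hxy =>
    ⟨hxy.1.symm, fun hlt => by rw [hs y x]; exact hxy.2 hlt⟩) h3

lemma UB_append {u m v : Fin n} {w₁ w₂ : List (Fin n)}
    (h₁ : IsUBWalk a u m w₁) (h₂ : IsUBWalk a m v w₂) :
    IsUBWalk a u v (w₁ ++ w₂.tail) := by
  obtain ⟨p, q, r⟩ := gwalk_append h₁.1 h₁.2.1 h₂.1 h₂.2.1 h₁.2.2 h₂.2.2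
  exact ⟨p, q, r⟩

lemma LB_append {u m v : Fin n} {w₁ w₂ : List (Fin n)}
    (h₁ : IsLBWalk a u m w₁) (h₂ : IsLBWalk a m v w₂) :
    IsLBWalk a u v (w₁ ++ w₂.tail) := by
  obtain ⟨p, q, r⟩ := gwalk_append h₁.1 h₁.2.1 h₂.1 h₂.2.1 h₁.2.2 h₂.2.2
  exact ⟨p, q, r⟩

lemma UBreduce (hs : ∀ x y, a x y = a y x) (hpc : PathCondition n k a d) :
    ∀ (N : ℕ) (w : List (Fin n)) (u v : Fin n), w.length ≤ N → IsUBWalk a u v w →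
      ∃ p, IsUBWalk a u v p ∧ p.Nodup ∧
        dotProd k (betaPWalk k a p) d ≤ dotProd k (betaPWalk k a w) d := by
  intro N
  induction N with
  | zero =>
    intro w u v hlen hw
    rcases w with _ | _
    · simp [IsUBWalk] at hw
    · simp at hlen
  | succ N ih =>
    intro w u v hlen hw
    by_cases hnd : w.Nodup
    · exact ⟨w, hw, hnd, le_refl _⟩
    obtain ⟨l₁, x, l₂, l₃, rfl⟩ := exists_dup_decomp hnd
    obtain ⟨hh, hl, hc⟩ := hw
    have hcw := chain'_iff_stp.1 hc
    have e1 := stp_surgery l₁ x l₂ l₃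
    have e2 := stp_skip l₁ x l₃
    -- the three pieces
    have hAhead : (l₁ ++ [x]).head? = some u := by
      simp only [List.append_assoc, List.cons_append] at hh
      rw [← head?_append_cons l₁ x (l₂ ++ x :: l₃)]; exact hh
    have hAlast : (l₁ ++ [x]).getLast? = some x := by
      rw [List.getLast?_append_cons]; rfl
    have hBlast : (x :: l₃).getLast? = some v := by
      rw [List.getLast?_append_cons] at hl
      exact hl
    have hmemA : ∀ p ∈ (l₁ ++ [x]).zip (l₁ ++ [x]).tail,
        p ∈ ((l₁ ++ x :: l₂ ++ x :: l₃).zip (l₁ ++ x :: l₂ ++ x :: l₃).tail) := by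
      intro p hp; rw [e1]; simp only [List.mem_append]; tauto
    have hmemC : ∀ p ∈ ((x :: l₂) ++ [x]).zip (((x :: l₂) ++ [x])).tail,
        p ∈ ((l₁ ++ x :: l₂ ++ x :: l₃).zip (l₁ ++ x :: l₂ ++ x :: l₃).tail) := by
      intro p hp; rw [e1]; simp only [List.mem_append]; tauto
    have hmemB : ∀ p ∈ (x :: l₃).zip (x :: l₃).tail,
        p ∈ ((l₁ ++ x :: l₂ ++ x :: l₃).zip (l₁ ++ x :: l₂ ++ x :: l₃).tail) := by
      intro p hp; rw [e1]; simp only [List.mem_append]; tauto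
    have hCwalk : IsUBWalk a x x ((x :: l₂) ++ [x]) := by
      refine ⟨rfl, by rw [List.getLast?_append_cons]; rfl, ?_⟩
      exact chain'_iff_stp.2 fun p hp => hcw p (hmemC p hp)
    -- the shortened walk
    have hw' : IsUBWalk a u v (l₁ ++ x :: l₃) := by
      refine ⟨by rw [head?_append_cons]; exact hAhead, ?_, ?_⟩
      · rw [List.getLast?_append_cons]; exact hBlast
      · refine chain'_iff_stp.2 fun p hp => hcw p ?_
        rw [e2] at hp
        rcases List.mem_append.1 hp with h | h
        · exact hmemA p h
        · exact hmemB p h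
    -- sums
    have hsum : betaPWalk k a (l₁ ++ x :: l₂ ++ x :: l₃)
        = betaPWalk k a (l₁ ++ x :: l₃) + betaPWalk k a ((x :: l₂) ++ [x]) := by
      simp only [betaPWalk]
      rw [e1, e2]
      simp only [List.map_append, List.sum_append]
      abel
    -- positivity of the cycle
    have hCpos : 0 < dotProd k (betaPWalk k a ((x :: l₂) ++ [x])) d := by
      rcases l₂ with _ | ⟨y, l₂'⟩
      · exfalso
        have := hCwalk.2.2
        simp [List.Chain', List.isChain_cons_cons] at this
      · have hchainC := hCwalk.2.2
        simp only [List.cons_append] at hchainC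
        unfold List.Chain' at hchainC; rw [List.isChain_cons_cons] at hchainC
        obtain ⟨⟨hxy, hedge⟩, hchainB⟩ := hchainC
        have hB'walk : IsUBWalk a y x (y :: (l₂' ++ [x])) :=
          ⟨rfl, by rw [show y :: (l₂' ++ [x]) = (y :: l₂') ++ [x] from rfl,
            List.getLast?_append_cons]; rfl, hchainB⟩
        have hB'len : (y :: (l₂' ++ [x])).length ≤ N := by
          simp at hlen ⊢
          omega
        obtain ⟨p, hp, hpnd, hple⟩ := ih _ _ _ hB'len hB'walk
        have hsplit : betaPWalk k a ((x :: y :: l₂') ++ [x])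
            = betaPWalk k a [x, y] + betaPWalk k a (y :: (l₂' ++ [x])) := by
          have h := betaPWalk_append (k := k) (a := a)
            (w₁ := [x, y]) (w₂ := y :: (l₂' ++ [x])) (m := y) (by simp) rfl
          simpa using h
        rcases lt_or_gt_of_ne hxy with hlt | hgt
        · -- x < y : path condition at (x, y)
          have hq : IsLBWalk a x y p.reverse := UB_reverse hs hp
          have hxyUB : IsUBWalk a x y [x, y] :=
            ⟨rfl, rfl, List.isChain_pair.2 ⟨hxy, hedge⟩⟩
          have hpcxy := hpc x y hlt [x, y] p.reverse hxyUB
            (by simp [hxy]) hq (List.nodup_reverse.2 hpnd)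
          have hrev : dotProd k (betaMWalk k a p.reverse) d
              = - dotProd k (betaPWalk k a p) d := by
            rw [betaMWalk_reverse hs, dot_neg]
          rw [hsplit, dot_add]
          rw [hrev] at hpcxy
          have h1 : betaPWalk k a [x, y] = betaP k a x y := by
            simp [betaPWalk]
          linarith
        · -- y < x : path condition at (y, x)
          have hyxLB : IsLBWalk a y x [y, x] :=
            ⟨rfl, rfl, List.isChain_pair.2 ⟨hxy.symm, fun h => absurd h (not_lt.2 hgt.le)⟩⟩
          have hpcyx := hpc y x hgt p [y, x] hp hpnd hyxLB (by simp [hxy.symm])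
          have hPM : betaPWalk k a [x, y] = - betaMWalk k a [y, x] := by
            simp only [betaPWalk, betaMWalk, List.zip_cons_cons, List.tail_cons]
            simp [betaP_rev hs y x]
          rw [hsplit, dot_add, hPM, dot_neg]
          have : dotProd k (betaMWalk k a [y, x]) d
              < dotProd k (betaPWalk k a (y :: (l₂' ++ [x]))) d := lt_of_lt_of_le hpcyx hple
          linarith
    -- recurse on the shortened walk
    have hw'len : (l₁ ++ x :: l₃).length ≤ N := by
      simp only [List.length_append, List.length_cons] at hlen ⊢
      omega
    obtain ⟨p, hp, hpnd, hple⟩ := ih _ _ _ hw'len hw'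
    refine ⟨p, hp, hpnd, ?_⟩
    rw [hsum, dot_add]
    linarith

lemma LBreduce (hs : ∀ x y, a x y = a y x) (hpc : PathCondition n k a d) :
    ∀ (w : List (Fin n)) (u v : Fin n), IsLBWalk a u v w →
      ∃ p, IsLBWalk a u v p ∧ p.Nodup ∧
        dotProd k (betaMWalk k a w) d ≤ dotProd k (betaMWalk k a p) d := by
  intro w u v hw
  obtain ⟨p, hp, hpnd, hple⟩ := UBreduce hs hpc w.reverse.length w.reverse v u
    (le_refl _) (LB_reverse hs hw)
  refine ⟨p.reverse, UB_reverse hs hp, List.nodup_reverse.2 hpnd, ?_⟩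
  rw [betaPWalk_reverse hs, dot_neg] at hple
  rw [betaMWalk_reverse hs, dot_neg]
  linarith

lemma WPC (hs : ∀ x y, a x y = a y x) (hpc : PathCondition n k a d)
    {u v : Fin n} (huv : u < v) {w₁ w₂ : List (Fin n)}
    (h₁ : IsUBWalk a u v w₁) (h₂ : IsLBWalk a u v w₂) :
    dotProd k (betaMWalk k a w₂) d < dotProd k (betaPWalk k a w₁) d := by
  obtain ⟨p₁, hp₁, hnd₁, hle₁⟩ := UBreduce hs hpc w₁.length w₁ u v (le_refl _) h₁
  obtain ⟨p₂, hp₂, hnd₂, hle₂⟩ := LBreduce hs hpc w₂ u v h₂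
  have := hpc u v huv p₁ p₂ hp₁ hnd₁ hp₂ hnd₂
  linarith

end Reduce

end Stmt9

/-- Lemma 5: given `d ∈ 𝔻ᵏ` satisfying the path condition for `A`, the map
`Π` defined recursively by `Π(1) = 0` and `Π(v) = (ub_v + lb_v)/2` satisfies the strict
inequality system for `A` with respect to `d`; in particular it is a uniform embedding of
`A` with respect to `d`. -/
theorem statement9 (n k : ℕ) (hn : 1 ≤ n) (hk : 1 ≤ k) (a : Fin n → Fin n → ℕ)
    (hA : IsRobinson n k a) (d : ℕ → ℝ) (hd : IsThreshold k d)
    (hpc : PathCondition n k a d) (f ub lb : Fin n → ℝ)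
    (hub : ∀ v : Fin n, 0 < v.val → IsLeast
      {x : ℝ | ∃ i : Fin n, i < v ∧ ∃ w : List (Fin n),
        IsUBWalk a i v w ∧ w.Nodup ∧ x = f i + dotProd k (betaPWalk k a w) d} (ub v))
    (hlb : ∀ v : Fin n, 0 < v.val → IsGreatest
      {x : ℝ | ∃ i : Fin n, i < v ∧ ∃ w : List (Fin n),
        IsLBWalk a i v w ∧ w.Nodup ∧ x = f i + dotProd k (betaMWalk k a w) d} (lb v))
    (hf0 : f ⟨0, hn⟩ = 0)
    (hfv : ∀ v : Fin n, 0 < v.val → f v = (ub v + lb v) / 2) :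
    SatisfiesStrict n k a d f ∧ IsUnifEmb n k a d f := by
  obtain ⟨hsymm, hdiag, hlek, hrob⟩ := hA
  -- monotonicity facts about d
  have dmono : ∀ i j, 1 ≤ i → i ≤ j → j ≤ k → d j ≤ d i := by
    intro i j h1 h2 h3
    induction j with
    | zero => omega
    | succ m ihm =>
      rcases Nat.lt_or_ge i (m + 1) with h | h
      · have h4 := hd.1 m (by omega) (by omega)
        have h5 := ihm (by omega) (by omega)
        linarith
      · have : i = m + 1 := by omega
        subst this; exact le_refl _
  have dpos : ∀ i, 1 ≤ i → i ≤ k → 0 < d i := by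
    intro i h1 h2
    have := dmono i k h1 h2 (le_refl _)
    have := hd.2
    linarith
  -- single-step walk evaluations
  have hM1 : ∀ u v : Fin n, u < v →
      dotProd k (betaMWalk k a [u, v]) d = if a u v = k then 0 else d (a u v + 1) := by
    intro u v huv
    have h : betaMWalk k a [u, v] = betaM k a u v := by simp [betaMWalk]
    rw [h, betaM, if_pos huv]
    by_cases hk' : a u v = k
    · rw [if_pos hk', if_pos hk', Stmt9.dot_zero]
    · rw [if_neg hk', if_neg hk', Stmt9.dot_chi, if_pos]
      have := hlek u v
      exact Finset.mem_Icc.2 ⟨by omega, by omega⟩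
  have hP1 : ∀ u v : Fin n, u < v → 1 ≤ a u v →
      dotProd k (betaPWalk k a [u, v]) d = d (a u v) := by
    intro u v huv h1
    have h : betaPWalk k a [u, v] = betaP k a u v := by simp [betaPWalk]
    rw [h, betaP, if_pos huv, Stmt9.dot_chi, if_pos]
    exact Finset.mem_Icc.2 ⟨h1, hlek u v⟩
  have hLB1 : ∀ u v : Fin n, u < v → IsLBWalk a u v [u, v] := by
    intro u v huv
    exact ⟨rfl, rfl, List.isChain_pair.2 ⟨ne_of_lt huv, fun h => absurd h (not_lt.2 huv.le)⟩⟩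
  have hUB1 : ∀ u v : Fin n, u < v → 1 ≤ a u v → IsUBWalk a u v [u, v] := by
    intro u v huv h1
    exact ⟨rfl, rfl, List.isChain_pair.2 ⟨ne_of_lt huv, fun _ => h1⟩⟩
  -- the main induction
  have key : ∀ (N : ℕ) (v : Fin n), v.val ≤ N → ∀ u : Fin n, u < v →
      (∀ w, IsUBWalk a u v w → f v - f u < dotProd k (betaPWalk k a w) d) ∧
      (∀ w, IsLBWalk a u v w → dotProd k (betaMWalk k a w) d < f v - f u) := by
    intro N
    induction N with
    | zero =>
      intro v hv u hu
      exfalso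
      have : u.val < v.val := hu
      omega
    | succ N ihN =>
      intro v hvN u huv
      have hvpos : 0 < v.val := Nat.lt_of_le_of_lt (Nat.zero_le _) huv
      obtain ⟨hubmem, hubLB⟩ := hub v hvpos
      obtain ⟨hlbmem, hlbUB⟩ := hlb v hvpos
      obtain ⟨i₁, hi₁v, W₁, hW₁, hW₁nd, hubeq⟩ := hubmem
      obtain ⟨i₂, hi₂v, W₂, hW₂, hW₂nd, hlbeq⟩ := hlbmem
      have hlbub : lb v < ub v := by
        rcases lt_trichotomy i₁ i₂ with h | h | h
        · -- i₁ < i₂ : use the UB walk W₁ ++ (reverse W₂).tail from i₁ to i₂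
          have hrev : IsUBWalk a v i₂ W₂.reverse := Stmt9.LB_reverse hsymm hW₂
          have hcat : IsUBWalk a i₁ i₂ (W₁ ++ W₂.reverse.tail) := Stmt9.UB_append hW₁ hrev
          have hi₂N : i₂.val ≤ N := by
            have h1 : i₂.val < v.val := hi₂v
            omega
          have hQ := (ihN i₂ hi₂N i₁ h).1 _ hcat
          have hβ : betaPWalk k a (W₁ ++ W₂.reverse.tail)
              = betaPWalk k a W₁ + betaPWalk k a W₂.reverse :=
            Stmt9.betaPWalk_append hW₁.2.1 hrev.1
          rw [hβ, Stmt9.dot_add, Stmt9.betaPWalk_reverse hsymm, Stmt9.dot_neg] at hQ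
          rw [hubeq, hlbeq]; linarith
        · subst h
          have := Stmt9.WPC hsymm hpc hi₁v hW₁ hW₂
          rw [hubeq, hlbeq]; linarith
        · -- i₂ < i₁ : use the LB walk W₂ ++ (reverse W₁).tail from i₂ to i₁
          have hrev : IsLBWalk a v i₁ W₁.reverse := Stmt9.UB_reverse hsymm hW₁
          have hcat : IsLBWalk a i₂ i₁ (W₂ ++ W₁.reverse.tail) := Stmt9.LB_append hW₂ hrev
          have hi₁N : i₁.val ≤ N := by
            have h1 : i₁.val < v.val := hi₁v
            omega
          have hQ := (ihN i₁ hi₁N i₂ h).2 _ hcat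
          have hβ : betaMWalk k a (W₂ ++ W₁.reverse.tail)
              = betaMWalk k a W₂ + betaMWalk k a W₁.reverse :=
            Stmt9.betaMWalk_append hW₂.2.1 hrev.1
          rw [hβ, Stmt9.dot_add, Stmt9.betaMWalk_reverse hsymm, Stmt9.dot_neg] at hQ
          rw [hubeq, hlbeq]; linarith
      have hfveq := hfv v hvpos
      have hflb : lb v < f v := by rw [hfveq]; linarith
      have hfub : f v < ub v := by rw [hfveq]; linarith
      constructor
      · intro w hw
        obtain ⟨p, hp, hpnd, hple⟩ :=
          Stmt9.UBreduce hsymm hpc w.length w u v (le_refl _) hw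
        have := hubLB ⟨u, huv, p, hp, hpnd, rfl⟩
        linarith
      · intro w hw
        obtain ⟨p, hp, hpnd, hple⟩ := Stmt9.LBreduce hsymm hpc w u v hw
        have := hlbUB ⟨u, huv, p, hp, hpnd, rfl⟩
        linarith
  have key' := fun (v : Fin n) => key v.val v (le_refl _)
  -- the strict inequality system
  have strict : SatisfiesStrict n k a d f := by
    intro u v huv t ht
    obtain ⟨hQ1, hQ2⟩ := key' v u huv
    have hlow : (if a u v = k then (0 : ℝ) else d (a u v + 1)) < f v - f u := by
      have h := hQ2 [u, v] (hLB1 u v huv)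
      rwa [hM1 u v huv] at h
    have hhigh : a u v = 0 ∨ f v - f u < d (a u v) := by
      by_cases h0 : a u v = 0
      · exact Or.inl h0
      · right
        have h := hQ1 [u, v] (hUB1 u v huv (by omega))
        rwa [hP1 u v huv (by omega)] at h
    constructor
    · intro hEq; subst hEq; exact ⟨hlow, hhigh⟩
    · rintro ⟨h1, h2⟩
      by_contra hne
      rcases Nat.lt_trichotomy t (a u v) with hc | hc | hc
      · -- t < a u v : contradiction
        have hx : f v - f u < d (a u v) := by
          rcases hhigh with h0 | h0
          · omega
          · exact h0
        rw [if_neg (by have := hlek u v; omega)] at h1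
        have := dmono (t + 1) (a u v) (by omega) (by omega) (hlek u v)
        linarith
      · exact hne hc.symm
      · -- a u v < t : contradiction
        have hx : f v - f u < d t := by
          rcases h2 with h0 | h0
          · omega
          · exact h0
        rw [if_neg (by omega)] at hlow
        have := dmono (a u v + 1) t (by omega) (by omega) ht
        linarith
  refine ⟨strict, ?_⟩
  -- uniform embedding, first for u < v
  have embAux : ∀ u v : Fin n, u < v → ∀ t : ℕ, t ≤ k →
      (a u v = t ↔ (t = k ∨ d (t + 1) < |f v - f u|) ∧ (t = 0 ∨ |f v - f u| ≤ d t)) := by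
    intro u v huv t ht
    have hs := strict u v huv
    have hst := (hs (a u v) (hlek u v)).1 rfl
    have hpos : 0 < f v - f u := by
      have h1 := hst.1
      by_cases hk' : a u v = k
      · rwa [if_pos hk'] at h1
      · rw [if_neg hk'] at h1
        have := dpos (a u v + 1) (by omega) (by have := hlek u v; omega)
        linarith
    rw [abs_of_pos hpos]
    constructor
    · intro hEq
      obtain ⟨h1, h2⟩ := (hs t ht).1 hEq
      refine ⟨?_, ?_⟩
      · by_cases hk' : t = k
        · exact Or.inl hk'
        · rw [if_neg hk'] at h1; exact Or.inr h1
      · rcases h2 with h0 | h0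
        · exact Or.inl h0
        · exact Or.inr h0.le
    · rintro ⟨h1, h2⟩
      by_contra hne
      rcases Nat.lt_trichotomy t (a u v) with hc | hc | hc
      · -- t < a u v
        have hx : f v - f u < d (a u v) := by
          rcases hst.2 with h0 | h0
          · omega
          · exact h0
        rcases h1 with hk' | h1
        · have := hlek u v; omega
        · have := dmono (t + 1) (a u v) (by omega) (by omega) (hlek u v)
          linarith
      · exact hne hc.symm
      · -- a u v < t
        have hx : f v - f u ≤ d t := by
          rcases h2 with h0 | h0
          · omega
          · exact h0
        have h1' := hst.1
        rw [if_neg (by omega)] at h1'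
        have := dmono (a u v + 1) t (by omega) (by omega) ht
        linarith
  intro u v t ht
  rcases lt_trichotomy u v with huv | rfl | hvu
  · exact embAux u v huv t ht
  · rw [sub_self, abs_zero, hdiag u]
    constructor
    · intro hEq
      subst hEq
      exact ⟨Or.inl rfl, Or.inr (dpos k hk (le_refl _)).le⟩
    · rintro ⟨h1, h2⟩
      by_cases hk' : t = k
      · omega
      · exfalso
        rcases h1 with h1 | h1
        · exact hk' h1
        · have := dpos (t + 1) (by omega) (by omega)
          linarith
  · rw [hsymm u v, abs_sub_comm]
    exact embAux v u hvu t ht
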